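/- Let X ∼ Lomax(α₁, λ₁) and Y ∼ Lomax(α₂, λ₂) with α₁, α₂ > 1. Then the inequality (α₁/(α₁−1))·q(p; α₁, λ₁) ≤ (α₂/(α₂−1))·q(p; α₂, λ₂) holds for all p ∈ (0,1) if and only if α₁ ≥ α₂ and λ₁/(α₁−1) ≤ λ₂/(α₂−1). -/

import Mathlib

open Set Real Filter

noncomputable def lomaxQuantile (α lam p : ℝ) : ℝ := lam * ((1 - p) ^ (-1 / α) - 1)

private lemma lomax_key (α lam p : ℝ) (hp : p ∈ Ioo (0:ℝ) 1) :
    lomaxQuantile α lam p = lam * (Real.exp ((-Real.log (1 - p)) / α) - 1) := by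
  have h1 : (0:ℝ) < 1 - p := by linarith [hp.2]
  rw [lomaxQuantile, Real.rpow_def_of_pos h1]
  congr 2
  ring

private lemma slope_exp_mono {u v : ℝ} (hu : 0 < u) (huv : u ≤ v) :
    (Real.exp u - 1) / u ≤ (Real.exp v - 1) / v := by
  have := convexOn_exp.secant_mono (a := 0) (x := u) (y := v)
    (mem_univ _) (mem_univ _) (mem_univ _) hu.ne' (hu.trans_le huv).ne' huv
  simpa using this

private lemma s_version (α₁ α₂ lam₁ lam₂ : ℝ)
    (hα₁ : 1 < α₁) (hα₂ : 1 < α₂) (hlam₁ : 0 < lam₁) (hlam₂ : 0 < lam₂)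
    (hα : α₂ ≤ α₁) (hL : lam₁ / (α₁ - 1) ≤ lam₂ / (α₂ - 1)) {s : ℝ} (hs : 0 < s) :
    α₁ / (α₁ - 1) * (lam₁ * (Real.exp (s / α₁) - 1)) ≤
      α₂ / (α₂ - 1) * (lam₂ * (Real.exp (s / α₂) - 1)) := by
  have hα₁0 : (0:ℝ) < α₁ := by linarith
  have hα₂0 : (0:ℝ) < α₂ := by linarith
  have h1s : (0:ℝ) < α₁ - 1 := by linarith
  have h2s : (0:ℝ) < α₂ - 1 := by linarith
  have hα₁n : α₁ ≠ 0 := hα₁0.ne'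
  have hα₂n : α₂ ≠ 0 := hα₂0.ne'
  have h1n : α₁ - 1 ≠ 0 := h1s.ne'
  have h2n : α₂ - 1 ≠ 0 := h2s.ne'
  have hsn : s ≠ 0 := hs.ne'
  have hu : 0 < s / α₁ := div_pos hs hα₁0
  have huv : s / α₁ ≤ s / α₂ := div_le_div_of_nonneg_left hs.le hα₂0 hα
  have key := slope_exp_mono hu huv
  have h1 : 0 ≤ (Real.exp (s / α₁) - 1) / (s / α₁) := by
    have : 1 ≤ Real.exp (s / α₁) := Real.one_le_exp hu.le
    exact div_nonneg (by linarith) hu.le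
  have hL1 : (0:ℝ) ≤ lam₁ / (α₁ - 1) := div_nonneg hlam₁.le h1s.le
  have hL2 : (0:ℝ) ≤ lam₂ / (α₂ - 1) := div_nonneg hlam₂.le h2s.le
  have hmul := mul_le_mul hL key h1 hL2
  have hmul2 := mul_le_mul_of_nonneg_left hmul hs.le
  have e1 : s * (lam₁ / (α₁ - 1) * ((Real.exp (s / α₁) - 1) / (s / α₁))) =
      α₁ / (α₁ - 1) * (lam₁ * (Real.exp (s / α₁) - 1)) := by
    field_simp
  have e2 : s * (lam₂ / (α₂ - 1) * ((Real.exp (s / α₂) - 1) / (s / α₂))) =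
      α₂ / (α₂ - 1) * (lam₂ * (Real.exp (s / α₂) - 1)) := by
    field_simp
  rwa [e1, e2] at hmul2

theorem lomax_dilation_iff (α₁ α₂ lam₁ lam₂ : ℝ)
    (hα₁ : 1 < α₁) (hα₂ : 1 < α₂) (hlam₁ : 0 < lam₁) (hlam₂ : 0 < lam₂) :
    (∀ p ∈ Ioo (0 : ℝ) 1,
        α₁ / (α₁ - 1) * lomaxQuantile α₁ lam₁ p ≤ α₂ / (α₂ - 1) * lomaxQuantile α₂ lam₂ p) ↔
      (α₁ ≥ α₂ ∧ lam₁ / (α₁ - 1) ≤ lam₂ / (α₂ - 1)) := by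
  have hα₁0 : (0:ℝ) < α₁ := by linarith
  have hα₂0 : (0:ℝ) < α₂ := by linarith
  have h1s : (0:ℝ) < α₁ - 1 := by linarith
  have h2s : (0:ℝ) < α₂ - 1 := by linarith
  have hα₁n : α₁ ≠ 0 := hα₁0.ne'
  have hα₂n : α₂ ≠ 0 := hα₂0.ne'
  have h1n : α₁ - 1 ≠ 0 := h1s.ne'
  have h2n : α₂ - 1 ≠ 0 := h2s.ne'
  constructor
  · intro H
    have Hs : ∀ s : ℝ, 0 < s →
        α₁ / (α₁ - 1) * (lam₁ * (Real.exp (s / α₁) - 1)) ≤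
          α₂ / (α₂ - 1) * (lam₂ * (Real.exp (s / α₂) - 1)) := by
      intro s hs
      have hp : (1 - Real.exp (-s)) ∈ Ioo (0:ℝ) 1 := by
        constructor
        · have : Real.exp (-s) < 1 := Real.exp_lt_one_iff.2 (by linarith)
          linarith
        · have := Real.exp_pos (-s); linarith
      have := H _ hp
      rw [lomax_key _ _ _ hp, lomax_key _ _ _ hp] at this
      have hlog : -Real.log (1 - (1 - Real.exp (-s))) = s := by
        simp [Real.log_exp]
      rw [hlog] at this
      exact this
    constructor
    · by_contra hcon
      push_neg at hcon
      set c₁ := α₁ / (α₁ - 1) * lam₁ with hc₁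
      set c₂ := α₂ / (α₂ - 1) * lam₂ with hc₂
      have hc₁0 : 0 < c₁ := mul_pos (div_pos hα₁0 h1s) hlam₁
      have hc₂0 : 0 < c₂ := mul_pos (div_pos hα₂0 h2s) hlam₂
      have hd : 0 < 1 / α₁ - 1 / α₂ := by
        rw [sub_pos]
        exact one_div_lt_one_div_of_lt hα₁0 hcon
      have t1 : Tendsto (fun s : ℝ => Real.exp (s * (1 / α₁ - 1 / α₂))) atTop atTop :=
        Real.tendsto_exp_atTop.comp (Tendsto.atTop_mul_const hd tendsto_id)
      have t2 : Tendsto (fun s : ℝ => c₁ * Real.exp (s * (1 / α₁ - 1 / α₂)) - c₂) atTop atTop :=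
        tendsto_atTop_add_const_right _ _ (t1.const_mul_atTop hc₁0)
      have t3 : Tendsto (fun s : ℝ => Real.exp (s / α₂)) atTop atTop :=
        Real.tendsto_exp_atTop.comp (Tendsto.atTop_div_const hα₂0 tendsto_id)
      have t4 : Tendsto (fun s : ℝ =>
          Real.exp (s / α₂) * (c₁ * Real.exp (s * (1 / α₁ - 1 / α₂)) - c₂)) atTop atTop :=
        Tendsto.atTop_mul_atTop₀ t3 t2
      have t5 : Tendsto (fun s : ℝ => c₁ * Real.exp (s / α₁) - c₂ * Real.exp (s / α₂))
          atTop atTop := by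
        refine t4.congr fun s => ?_
        rw [mul_sub, mul_comm (Real.exp (s / α₂)) (c₁ * Real.exp (s * (1 / α₁ - 1 / α₂))),
          mul_assoc, ← Real.exp_add]
        have : s * (1 / α₁ - 1 / α₂) + s / α₂ = s / α₁ := by field_simp; ring
        rw [this, mul_comm (Real.exp (s / α₂)) c₂]
      have t6 : Tendsto (fun s : ℝ =>
          c₁ * (Real.exp (s / α₁) - 1) - c₂ * (Real.exp (s / α₂) - 1)) atTop atTop := by
        have := tendsto_atTop_add_const_right atTop (-c₁ + c₂) t5
        exact this.congr fun s => by ring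
      obtain ⟨s, hs⟩ := ((t6.eventually_gt_atTop 0).and (eventually_gt_atTop 0)).exists
      have hcon2 := Hs s hs.2
      rw [hc₁, hc₂] at hs
      nlinarith [hs.1, hcon2]
    · have deriv : ∀ α : ℝ, 0 < α →
          Tendsto (fun s : ℝ => (Real.exp (s / α) - 1) / s)
            (nhdsWithin 0 (Ioi 0)) (nhds (1/α)) := by
        intro α hα
        have h : HasDerivAt (fun s : ℝ => Real.exp (s / α)) (1/α) 0 := by
          have h1 : HasDerivAt (fun s : ℝ => s / α) (1/α) 0 := (hasDerivAt_id 0).div_const α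
          have h2 := (Real.hasDerivAt_exp (0 / α)).comp 0 h1
          simpa [Function.comp_def] using h2
        have := hasDerivAt_iff_tendsto_slope.1 h
        have h3 := this.mono_left (nhdsWithin_mono 0 (fun x hx => by
          simp only [mem_compl_iff, mem_singleton_iff]
          exact ne_of_gt hx))
        refine h3.congr fun s => ?_
        simp [slope_def_field, div_eq_div_iff]
      have t1 := ((deriv α₁ hα₁0).const_mul (α₁ / (α₁ - 1) * lam₁))
      have t2 := ((deriv α₂ hα₂0).const_mul (α₂ / (α₂ - 1) * lam₂))
      have hle : α₁ / (α₁ - 1) * lam₁ * (1/α₁) ≤ α₂ / (α₂ - 1) * lam₂ * (1/α₂) := by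
        refine le_of_tendsto_of_tendsto t1 t2 ?_
        filter_upwards [self_mem_nhdsWithin] with s hs
        have hs : (0:ℝ) < s := hs
        have hineq := Hs s hs
        have h2 : α₁ / (α₁ - 1) * lam₁ * (Real.exp (s / α₁) - 1) ≤
            α₂ / (α₂ - 1) * lam₂ * (Real.exp (s / α₂) - 1) := by linarith [hineq]
        calc α₁ / (α₁ - 1) * lam₁ * ((Real.exp (s / α₁) - 1) / s)
            = (α₁ / (α₁ - 1) * lam₁ * (Real.exp (s / α₁) - 1)) / s := by ring
          _ ≤ (α₂ / (α₂ - 1) * lam₂ * (Real.exp (s / α₂) - 1)) / s := by gcongr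
          _ = α₂ / (α₂ - 1) * lam₂ * ((Real.exp (s / α₂) - 1) / s) := by ring
      have e1 : α₁ / (α₁ - 1) * lam₁ * (1/α₁) = lam₁ / (α₁ - 1) := by
        field_simp
      have e2 : α₂ / (α₂ - 1) * lam₂ * (1/α₂) = lam₂ / (α₂ - 1) := by
        field_simp
      rwa [e1, e2] at hle
  · rintro ⟨hα, hL⟩ p hp
    rw [lomax_key _ _ _ hp, lomax_key _ _ _ hp]
    have h1 : (0:ℝ) < 1 - p := by linarith [hp.2]
    have hs : 0 < -Real.log (1 - p) := by
      have := Real.log_neg h1 (by linarith [hp.1])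
      linarith
    exact s_version α₁ α₂ lam₁ lam₂ hα₁ hα₂ hlam₁ hlam₂ hα hL hs
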